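/- Let $b > 0$, $q = e^b/(e^b - 1)$, $C_b = e^{b(1-q)}/q$. Let $\mu_0, \mu_1$ be probability measures on a Polish space such that there exists $T < \infty$ with $C_b (\int e^{e^{-b} f}\, d\mu_1)^q \le T (\int e^f\, d\mu_0)^{q-1}$ for all bounded measurable $f \le 0$. Then $\mu_1$ is absolutely continuous with respect to $\mu_0$; more precisely, for any Borel set $A$ with $\mu_0(A) = 0$, we have $\mu_1(A) = 0$. -/

import Mathlib

open MeasureTheory Filter Topology

/-- Lemma 5.8: if on a Polish space there is a finite `T` with
`C_b (∫ e^{e^{-b} f} dμ1)^q ≤ T (∫ e^f dμ0)^{q-1}` for all bounded measurable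
`f ≤ 0`, then `μ1 ≪ μ0`: any Borel `A` with `μ0 A = 0` has `μ1 A = 0`. -/
theorem stmt_10 {X : Type*} [MeasurableSpace X] [TopologicalSpace X]
    [PolishSpace X] [BorelSpace X]
    (μ0 μ1 : Measure X) [IsProbabilityMeasure μ0] [IsProbabilityMeasure μ1]
    (b q Cb : ℝ) (hb : 0 < b)
    (hq : q = Real.exp b / (Real.exp b - 1))
    (hCb : Cb = Real.exp (b * (1 - q)) / q)
    (T : ℝ) (hT : 0 ≤ T)
    (h : ∀ f : X → ℝ, Measurable f → (∃ M, ∀ z, |f z| ≤ M) → (∀ z, f z ≤ 0) →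
      Cb * (∫ z, Real.exp (Real.exp (-b) * f z) ∂μ1) ^ q ≤
        T * (∫ z, Real.exp (f z) ∂μ0) ^ (q - 1)) :
    μ1 ≪ μ0 ∧ ∀ A : Set X, MeasurableSet A → μ0 A = 0 → μ1 A = 0 := by
  classical
  have hexp : (1:ℝ) < Real.exp b := by
    simpa using Real.exp_lt_exp.mpr hb
  have hq1 : 1 < q := by
    rw [hq, one_lt_div (by linarith)]; linarith
  have hq0 : 0 < q := lt_trans one_pos hq1
  have hCb0 : 0 < Cb := by
    rw [hCb]; exact div_pos (Real.exp_pos _) hq0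
  have key : ∀ A : Set X, MeasurableSet A → μ0 A = 0 → μ1 A = 0 := by
    intro A hA h0
    set m := (μ1 A).toReal with hmdef
    have hm0 : 0 ≤ m := ENNReal.toReal_nonneg
    have main : ∀ n : ℕ, Cb * m ^ q ≤ T * Real.exp (-((q-1) * n)) := by
      intro n
      set f : X → ℝ := fun z => if z ∈ A then 0 else -(n:ℝ) with hfdef
      have hfmeas : Measurable f := Measurable.ite hA measurable_const measurable_const
      have hfle : ∀ z, f z ≤ 0 := by
        intro z; by_cases hz : z ∈ A <;> simp [f, hz]
      have hfbd : ∃ M, ∀ z, |f z| ≤ M := by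
        refine ⟨n, fun z => ?_⟩
        by_cases hz : z ∈ A <;> simp [f, hz]
      have H := h f hfmeas hfbd hfle
      have hg1int : Integrable (fun z => Real.exp (Real.exp (-b) * f z)) μ1 := by
        refine Integrable.mono' (integrable_const 1)
          ((hfmeas.const_mul _).exp.aestronglyMeasurable) (ae_of_all _ fun z => ?_)
        rw [Real.norm_eq_abs, abs_of_pos (Real.exp_pos _)]
        exact Real.exp_le_one_iff.mpr
          (mul_nonpos_of_nonneg_of_nonpos (Real.exp_pos _).le (hfle z))
      have hμ1ge : m ≤ ∫ z, Real.exp (Real.exp (-b) * f z) ∂μ1 := by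
        have h1 : m = ∫ z in A, (1:ℝ) ∂μ1 := by
          rw [setIntegral_const]; simp [hmdef]; rfl
        have h2 : ∫ z in A, (1:ℝ) ∂μ1 = ∫ z in A, Real.exp (Real.exp (-b) * f z) ∂μ1 := by
          refine setIntegral_congr_fun hA fun z hz => ?_
          simp [f, hz]
        rw [h1, h2]
        exact setIntegral_le_integral hg1int (ae_of_all _ fun z => (Real.exp_pos _).le)
      have hg0int : Integrable (fun z => Real.exp (f z)) μ0 := by
        refine Integrable.mono' (integrable_const 1)
          (hfmeas.exp.aestronglyMeasurable) (ae_of_all _ fun z => ?_)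
        rw [Real.norm_eq_abs, abs_of_pos (Real.exp_pos _)]
        exact Real.exp_le_one_iff.mpr (hfle z)
      have hμ0le : ∫ z, Real.exp (f z) ∂μ0 ≤ Real.exp (-(n:ℝ)) := by
        have hae : ∀ᵐ z ∂μ0, Real.exp (f z) ≤ Real.exp (-(n:ℝ)) := by
          have hnm : ∀ᵐ z ∂μ0, z ∉ A := measure_eq_zero_iff_ae_notMem.mp h0
          filter_upwards [hnm] with z hz
          simp [f, hz]
        calc ∫ z, Real.exp (f z) ∂μ0 ≤ ∫ _z, Real.exp (-(n:ℝ)) ∂μ0 :=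
              integral_mono_ae hg0int (integrable_const _) hae
          _ = Real.exp (-(n:ℝ)) := by simp
      have hμ0nonneg : 0 ≤ ∫ z, Real.exp (f z) ∂μ0 :=
        integral_nonneg fun z => (Real.exp_pos _).le
      calc Cb * m ^ q ≤ Cb * (∫ z, Real.exp (Real.exp (-b) * f z) ∂μ1) ^ q := by
            gcongr
        _ ≤ T * (∫ z, Real.exp (f z) ∂μ0) ^ (q - 1) := H
        _ ≤ T * (Real.exp (-(n:ℝ))) ^ (q - 1) := by
            gcongr
        _ = T * Real.exp (-((q-1) * n)) := by
            rw [show -((q-1) * (n:ℝ)) = -(n:ℝ) * (q-1) by ring, Real.exp_mul]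
    have htend : Tendsto (fun n : ℕ => T * Real.exp (-((q-1) * n))) atTop (𝓝 0) := by
      rw [show (0:ℝ) = T * 0 by ring]
      refine Tendsto.const_mul T ?_
      refine Real.tendsto_exp_neg_atTop_nhds_zero.comp ?_
      exact Tendsto.const_mul_atTop (by linarith) tendsto_natCast_atTop_atTop
    have hfinal : Cb * m ^ q ≤ 0 := ge_of_tendsto' htend main
    have hrpow0 : m ^ q = 0 := by
      have hnn : 0 ≤ m ^ q := Real.rpow_nonneg hm0 q
      nlinarith
    have hm : m = 0 := by
      by_contra hne
      exact hne ((Real.rpow_eq_zero hm0 (ne_of_gt hq0)).mp hrpow0)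
    have := (ENNReal.toReal_eq_zero_iff (μ1 A)).mp hm
    rcases this with h' | h'
    · exact h'
    · exact absurd h' (measure_ne_top μ1 A)
  exact ⟨Measure.AbsolutelyContinuous.mk fun s hs h0 => key s hs h0, key⟩
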